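/- arXiv:2011.12788 — 2 statements merged into one kernel-verified Lean document; each statement's English description precedes it below -/
import Mathlib

section
/- Let B be a nondegenerate symmetric bilinear form on ℝⁿ and let g ∈ GL(n,ℝ) preserve B, i while B(gu, gv) = B(u,v) for all u, v. Then B(u, v) = 0 for all u ∈ A⁺(g) and all v ∈ D⁺(g); in particular A⁺(g) is a totally B-isotropic subspace. -/
open Matrix

noncomputable section

namespace AMS

/-- The group of invertible affine transformations of ℝⁿ. -/
abbrev Aff (n : ℕ) := (Fin n → ℝ) ≃ᵃ[ℝ] (Fin n → ℝ)

variable {n : ℕ}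

/-- A subgroup of `Aff n` acts properly discontinuously on ℝⁿ if for every compact set `K`
the set of elements of the subgroup moving `K` to a set meeting `K` is finite. -/
def ProperlyDiscontinuous (Γ : Subgroup (Aff n)) : Prop :=
  ∀ K : Set (Fin n → ℝ), IsCompact K →
    {γ : Aff n | γ ∈ Γ ∧ ((γ '' K) ∩ K).Nonempty}.Finite

/-- A subgroup of `Aff n` is crystallographic if it acts properly discontinuously and
cocompactly (the orbit of some compact set is all of ℝⁿ, equivalently the orbit space
is compact). -/
def IsCrystallographic (Γ : Subgroup (Aff n)) : Prop :=
  ProperlyDiscontinuous Γ ∧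
    ∃ K : Set (Fin n → ℝ), IsCompact K ∧ (⋃ γ ∈ Γ, (γ : Aff n) '' K) = Set.univ

/-- The coordinatewise complexification map ℝⁿ → ℂⁿ, as an ℝ-linear map. -/
def cpx (n : ℕ) : (Fin n → ℝ) →ₗ[ℝ] (Fin n → ℂ) where
  toFun v := fun i => (v i : ℂ)
  map_add' u v := by funext i; simp
  map_smul' c v := by funext i; simp [Complex.ofReal_mul]

/-- The complexification of a real `n × n` matrix, as a ℂ-linear endomorphism of ℂⁿ. -/
def cEnd (M : Matrix (Fin n) (Fin n) ℝ) : Module.End ℂ (Fin n → ℂ) :=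
  (M.map Complex.ofReal).mulVecLin

/-- The sum, over all complex eigenvalues `μ` satisfying the predicate `P`, of the
generalized eigenspaces of (the complexification of) `M` in ℂⁿ. -/
def genSum (M : Matrix (Fin n) (Fin n) ℝ) (P : ℂ → Prop) : Submodule ℂ (Fin n → ℂ) :=
  ⨆ μ ∈ {μ : ℂ | P μ}, (cEnd M).maxGenEigenspace μ

/-- `A⁺(g)`: the real points of the sum of the generalized eigenspaces for `|λ| > 1`. -/
def Aplus (M : Matrix (Fin n) (Fin n) ℝ) : Submodule ℝ (Fin n → ℝ) :=
  ((genSum M fun μ => 1 < ‖μ‖).restrictScalars ℝ).comap (cpx n)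

/-- `A⁻(g)`: the real points of the sum of the generalized eigenspaces for `|λ| < 1`. -/
def Aminus (M : Matrix (Fin n) (Fin n) ℝ) : Submodule ℝ (Fin n → ℝ) :=
  ((genSum M fun μ => ‖μ‖ < 1).restrictScalars ℝ).comap (cpx n)

/-- `A⁰(g)`: the real points of the sum of the generalized eigenspaces for `|λ| = 1`. -/
def Azero (M : Matrix (Fin n) (Fin n) ℝ) : Submodule ℝ (Fin n → ℝ) :=
  ((genSum M fun μ => ‖μ‖ = 1).restrictScalars ℝ).comap (cpx n)

/-- `D⁺(g) = A⁺(g) + A⁰(g)`. -/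
def Dplus (M : Matrix (Fin n) (Fin n) ℝ) : Submodule ℝ (Fin n → ℝ) := Aplus M ⊔ Azero M

/-- `D⁻(g) = A⁻(g) + A⁰(g)`. -/
def Dminus (M : Matrix (Fin n) (Fin n) ℝ) : Submodule ℝ (Fin n → ℝ) := Aminus M ⊔ Azero M



section Aux

variable {n : ℕ}

/-- Core induction: invariant bilinear form pairs generalized eigenvectors for `λ`, `μ`
with `λ * μ ≠ 1` to zero. -/
lemma core_zero (Bc : (Fin n → ℂ) →ₗ[ℂ] (Fin n → ℂ) →ₗ[ℂ] ℂ)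
    (G : Module.End ℂ (Fin n → ℂ)) (hinv : ∀ x y, Bc (G x) (G y) = Bc x y)
    (l m : ℂ) (hlm : l * m ≠ 1) :
    ∀ N a b : ℕ, a + b ≤ N → ∀ x y, ((G - l • 1) ^ a) x = 0 → ((G - m • 1) ^ b) y = 0 →
      Bc x y = 0 := by
  intro N
  induction N with
  | zero =>
    intro a b hab x y hx hy
    have ha : a = 0 := by omega
    subst ha
    simp only [pow_zero, Module.End.one_apply] at hx
    simp [hx]
  | succ N ih =>
    intro a b hab x y hx hy
    cases a with
    | zero =>
      simp only [pow_zero, Module.End.one_apply] at hx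
      simp [hx]
    | succ a =>
      cases b with
      | zero =>
        simp only [pow_zero, Module.End.one_apply] at hy
        simp [hy]
      | succ b =>
        set x' := (G - l • 1) x with hx'def
        set y' := (G - m • 1) y with hy'def
        have hx' : ((G - l • 1) ^ a) x' = 0 := by
          have : ((G - l • 1) ^ (a + 1)) x = ((G - l • 1) ^ a) x' := by
            rw [pow_succ, Module.End.mul_apply]
          rw [← this]; exact hx
        have hy' : ((G - m • 1) ^ b) y' = 0 := by
          have : ((G - m • 1) ^ (b + 1)) y = ((G - m • 1) ^ b) y' := by
            rw [pow_succ, Module.End.mul_apply]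
          rw [← this]; exact hy
        have ex : G x = l • x + x' := by
          rw [hx'def]; simp [LinearMap.sub_apply]
        have ey : G y = m • y + y' := by
          rw [hy'def]; simp [LinearMap.sub_apply]
        have z1 : Bc x y' = 0 := ih (a + 1) b (by omega) x y' hx hy'
        have z2 : Bc x' y = 0 := ih a (b + 1) (by omega) x' y hx' hy
        have z3 : Bc x' y' = 0 := ih a b (by omega) x' y' hx' hy'
        have key : Bc x y = l * m * Bc x y := by
          conv_lhs => rw [← hinv x y, ex, ey]
          simp only [map_add, _root_.map_smul, LinearMap.add_apply, LinearMap.smul_apply,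
            smul_eq_mul, z1, z2, z3]
          ring
        have h0 : (1 - l * m) * Bc x y = 0 := by
          linear_combination key
        rcases mul_eq_zero.mp h0 with h | h
        · exact absurd (by linear_combination -h) hlm
        · exact h

/-- Pairing of max generalized eigenspaces. -/
lemma maxGen_zero (Bc : (Fin n → ℂ) →ₗ[ℂ] (Fin n → ℂ) →ₗ[ℂ] ℂ)
    (G : Module.End ℂ (Fin n → ℂ)) (hinv : ∀ x y, Bc (G x) (G y) = Bc x y)
    (l m : ℂ) (hlm : l * m ≠ 1) (x y : Fin n → ℂ)
    (hx : x ∈ G.maxGenEigenspace l) (hy : y ∈ G.maxGenEigenspace m) : Bc x y = 0 := by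
  obtain ⟨a, ha⟩ := (Module.End.mem_maxGenEigenspace G l x).mp hx
  obtain ⟨b, hb⟩ := (Module.End.mem_maxGenEigenspace G m y).mp hy
  exact core_zero Bc G hinv l m hlm (a + b) a b le_rfl x y ha hb

/-- Pairing of sums of generalized eigenspaces. -/
lemma genSum_zero (M : Matrix (Fin n) (Fin n) ℝ)
    (Bc : (Fin n → ℂ) →ₗ[ℂ] (Fin n → ℂ) →ₗ[ℂ] ℂ)
    (hinv : ∀ x y, Bc (cEnd M x) (cEnd M y) = Bc x y)
    (P Q : ℂ → Prop) (hPQ : ∀ l m : ℂ, P l → Q m → l * m ≠ 1)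
    (x : Fin n → ℂ) (hx : x ∈ genSum M P) (y : Fin n → ℂ) (hy : y ∈ genSum M Q) :
    Bc x y = 0 := by
  have H : genSum M P ≤ LinearMap.ker (Bc.flip y) := by
    apply iSup₂_le
    intro l hl x' hx'
    rw [LinearMap.mem_ker, LinearMap.flip_apply]
    have H2 : genSum M Q ≤ LinearMap.ker (Bc x') := by
      apply iSup₂_le
      intro m hm y' hy'
      rw [LinearMap.mem_ker]
      exact maxGen_zero Bc (cEnd M) hinv l m (hPQ l m hl hm) x' y' hx' hy'
    exact H2 hy
  have := H hx
  rwa [LinearMap.mem_ker, LinearMap.flip_apply] at this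

end Aux

set_option maxHeartbeats 1000000 in
/-- If `B` is a nondegenerate symmetric bilinear form on ℝⁿ preserved by `g ∈ GL(n,ℝ)`,
then `B(u,v) = 0` for all `u ∈ A⁺(g)` and `v ∈ D⁺(g)`; in particular `A⁺(g)` is totally
`B`-isotropic. -/
theorem Aplus_isotropic (n : ℕ) (B : LinearMap.BilinForm ℝ (Fin n → ℝ))
    (hBnd : B.Nondegenerate) (hBsymm : ∀ u v : Fin n → ℝ, B u v = B v u)
    (g : GL (Fin n) ℝ)
    (hg : ∀ u v : Fin n → ℝ,
      B ((g : Matrix (Fin n) (Fin n) ℝ).mulVec u) ((g : Matrix (Fin n) (Fin n) ℝ).mulVec v)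
        = B u v) :
    (∀ u ∈ Aplus (g : Matrix (Fin n) (Fin n) ℝ),
      ∀ v ∈ Dplus (g : Matrix (Fin n) (Fin n) ℝ), B u v = 0) ∧
    (∀ u ∈ Aplus (g : Matrix (Fin n) (Fin n) ℝ),
      ∀ v ∈ Aplus (g : Matrix (Fin n) (Fin n) ℝ), B u v = 0) := by
  set gM : Matrix (Fin n) (Fin n) ℝ := (g : Matrix (Fin n) (Fin n) ℝ) with hgM
  set Mb : Matrix (Fin n) (Fin n) ℝ := LinearMap.toMatrix₂' ℝ B with hMb
  have hB : ∀ u v : Fin n → ℝ, B u v = Matrix.toLinearMap₂' ℝ Mb u v := by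
    intro u v
    rw [hMb, Matrix.toLinearMap₂'_toMatrix']
  -- the real matrix identity gMᵀ * Mb * gM = Mb
  have hBg : B.compl₁₂ (Matrix.toLin' gM) (Matrix.toLin' gM) = B := by
    apply LinearMap.ext; intro u; apply LinearMap.ext; intro v
    simp only [LinearMap.compl₁₂_apply, Matrix.toLin'_apply]
    exact hg u v
  have hmat : gMᵀ * Mb * gM = Mb := by
    have h1 := LinearMap.toMatrix₂'_compl₁₂ (R := ℝ) B (Matrix.toLin' gM) (Matrix.toLin' gM)
    rw [hBg, LinearMap.toMatrix'_toLin'] at h1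
    exact h1.symm
  -- complexification
  set Mc : Matrix (Fin n) (Fin n) ℂ := Mb.map Complex.ofReal with hMc
  set gc : Matrix (Fin n) (Fin n) ℂ := gM.map Complex.ofReal with hgc
  set Bc : (Fin n → ℂ) →ₗ[ℂ] (Fin n → ℂ) →ₗ[ℂ] ℂ := Matrix.toLinearMap₂' ℂ Mc with hBc
  have mapmul : ∀ (A C : Matrix (Fin n) (Fin n) ℝ),
      (A * C).map Complex.ofReal = A.map Complex.ofReal * C.map Complex.ofReal := by
    intro A C
    ext i j
    simp only [Matrix.map_apply, Matrix.mul_apply]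
    push_cast
    rfl
  have hmatC : gcᵀ * Mc * gc = Mc := by
    rw [hgc, hMc, ← Matrix.transpose_map, ← mapmul, ← mapmul, hmat]
  have hinvC : ∀ x y : Fin n → ℂ, Bc (cEnd gM x) (cEnd gM y) = Bc x y := by
    have hC : Bc.compl₁₂ (Matrix.toLin' gc) (Matrix.toLin' gc)
        = Matrix.toLinearMap₂' ℂ (gcᵀ * Mc * gc) := by
      apply (LinearMap.toMatrix₂' ℂ).injective
      rw [LinearMap.toMatrix₂'_compl₁₂, LinearMap.toMatrix'_toLin', hBc,
        LinearMap.toMatrix'_toLinearMap₂', LinearMap.toMatrix'_toLinearMap₂']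
    intro x y
    have e1 : Bc (gc *ᵥ x) (gc *ᵥ y)
        = (Bc.compl₁₂ (Matrix.toLin' gc) (Matrix.toLin' gc)) x y := by
      simp only [LinearMap.compl₁₂_apply, Matrix.toLin'_apply]
    have e2 : cEnd gM x = gc *ᵥ x := rfl
    have e3 : cEnd gM y = gc *ᵥ y := rfl
    rw [e2, e3, e1, hC, hmatC]
  have hcomp : ∀ u v : Fin n → ℝ, Bc (cpx n u) (cpx n v) = ((B u v : ℝ) : ℂ) := by
    intro u v
    rw [hB u v, hBc, Matrix.toLinearMap₂'_apply, Matrix.toLinearMap₂'_apply]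
    push_cast
    apply Finset.sum_congr rfl; intro i _
    apply Finset.sum_congr rfl; intro j _
    simp [cpx, Matrix.map_apply, smul_eq_mul, hMc]
  have main : ∀ (P Q : ℂ → Prop), (∀ l m : ℂ, P l → Q m → l * m ≠ 1) →
      ∀ u : Fin n → ℝ, cpx n u ∈ genSum gM P → ∀ v : Fin n → ℝ, cpx n v ∈ genSum gM Q →
      B u v = 0 := by
    intro P Q h u hu v hv
    have h0 := genSum_zero gM Bc hinvC P Q h _ hu _ hv
    rw [hcomp] at h0
    exact_mod_cast h0
  have hPP : ∀ l m : ℂ, 1 < ‖l‖ → 1 < ‖m‖ → l * m ≠ 1 := by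
    intro l m hl hm h1
    have : ‖l * m‖ = 1 := by rw [h1]; simp
    rw [norm_mul] at this
    nlinarith
  have hPZ : ∀ l m : ℂ, 1 < ‖l‖ → ‖m‖ = 1 → l * m ≠ 1 := by
    intro l m hl hm h1
    have : ‖l * m‖ = 1 := by rw [h1]; simp
    rw [norm_mul, hm, mul_one] at this
    linarith
  have hAA : ∀ u ∈ Aplus gM, ∀ v ∈ Aplus gM, B u v = 0 := by
    intro u hu v hv
    exact main _ _ hPP u hu v hv
  refine ⟨?_, hAA⟩
  intro u hu v hv
  rcases Submodule.mem_sup.mp hv with ⟨a, ha, c, hc, rfl⟩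
  have h1 : B u a = 0 := hAA u hu a ha
  have h2 : B u c = 0 := main _ _ hPZ u hu c hc
  rw [map_add, h1, h2, add_zero]

end AMS
end
end

section
/- Let g ∈ Aff(ℝⁿ) be an affine transformation whose linear part l(g) satisfies ker(l(g) − I) ∩ im(l(g) − I) = {0} (this holds in particular when l(g) is semisimple). Suppose L₁ and L₂ are g-invariant affine lines on which g acts as a translation, i.e. there are vectors t₁, t₂ with g p = p + tᵢ for every p ∈ Lᵢ (i = 1, 2). Then t₁ = t₂; in particular, if this common vector is nonzero then all such invariant lines are parallel to it. -/
noncomputable section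

namespace AMS

/-- Let `g` be an invertible affine transformation of ℝⁿ whose linear part `A` satisfies
`ker(A − I) ∩ im(A − I) = {0}`. If `L₁`, `L₂` are `g`-invariant affine lines on which `g`
acts as translation by vectors `t₁`, `t₂` respectively, then `t₁ = t₂`. -/
theorem translation_vector_unique (n : ℕ) (g : Aff n)
    (hss : LinearMap.ker ((g.linear : (Fin n → ℝ) →ₗ[ℝ] (Fin n → ℝ)) - LinearMap.id) ⊓
        LinearMap.range ((g.linear : (Fin n → ℝ) →ₗ[ℝ] (Fin n → ℝ)) - LinearMap.id) = ⊥)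
    (p₁ p₂ d₁ d₂ t₁ t₂ : Fin n → ℝ) (hd₁ : d₁ ≠ 0) (hd₂ : d₂ ≠ 0)
    (L₁ : Set (Fin n → ℝ)) (hL₁ : L₁ = {x | ∃ s : ℝ, x = p₁ + s • d₁})
    (L₂ : Set (Fin n → ℝ)) (hL₂ : L₂ = {x | ∃ s : ℝ, x = p₂ + s • d₂})
    (hinv₁ : g '' L₁ = L₁) (hinv₂ : g '' L₂ = L₂)
    (htr₁ : ∀ x ∈ L₁, g x = x + t₁) (htr₂ : ∀ x ∈ L₂, g x = x + t₂) :
    t₁ = t₂ := by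
  set A : (Fin n → ℝ) →ₗ[ℝ] (Fin n → ℝ) := (g.linear : (Fin n → ℝ) →ₗ[ℝ] (Fin n → ℝ))
  have hmap : ∀ p v : Fin n → ℝ, g (p + v) = g p + A v := by
    intro p v
    have := g.map_vadd p v
    simpa [vadd_eq_add, add_comm, A] using this
  -- membership of base points
  have hp₁ : p₁ ∈ L₁ := by
    rw [hL₁]; exact ⟨0, by simp⟩
  have hp₂ : p₂ ∈ L₂ := by
    rw [hL₂]; exact ⟨0, by simp⟩
  -- g pᵢ ∈ Lᵢ
  have hgp₁ : p₁ + t₁ ∈ L₁ := by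
    rw [← htr₁ p₁ hp₁, ← hinv₁]; exact Set.mem_image_of_mem g hp₁
  have hgp₂ : p₂ + t₂ ∈ L₂ := by
    rw [← htr₂ p₂ hp₂, ← hinv₂]; exact Set.mem_image_of_mem g hp₂
  -- A tᵢ = tᵢ
  have hAt₁ : A t₁ = t₁ := by
    have h1 := htr₁ (p₁ + t₁) hgp₁
    have h2 : g (p₁ + t₁) = p₁ + t₁ + A t₁ := by
      rw [hmap p₁ t₁, htr₁ p₁ hp₁]
    have := h1.symm.trans h2
    exact (add_left_cancel this).symm
  have hAt₂ : A t₂ = t₂ := by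
    have h1 := htr₂ (p₂ + t₂) hgp₂
    have h2 : g (p₂ + t₂) = p₂ + t₂ + A t₂ := by
      rw [hmap p₂ t₂, htr₂ p₂ hp₂]
    have := h1.symm.trans h2
    exact (add_left_cancel this).symm
  -- t₁ - t₂ = (A - I)(p₁ - p₂)
  have key : t₁ - t₂ = A (p₁ - p₂) - (p₁ - p₂) := by
    have e1 : g p₁ = p₁ + t₁ := htr₁ p₁ hp₁
    have e2 : g p₂ = p₂ + t₂ := htr₂ p₂ hp₂
    have e3 : g p₁ = g p₂ + A (p₁ - p₂) := by
      have := hmap p₂ (p₁ - p₂)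
      simpa using this
    rw [e1, e2] at e3
    funext i
    have := congrFun e3 i
    simp only [Pi.add_apply, Pi.sub_apply] at this ⊢
    linarith
  have hker : t₁ - t₂ ∈ LinearMap.ker (A - LinearMap.id) := by
    simp [LinearMap.mem_ker, LinearMap.sub_apply, map_sub, hAt₁, hAt₂]
  have hrange : t₁ - t₂ ∈ LinearMap.range (A - LinearMap.id) :=
    ⟨p₁ - p₂, by simp [LinearMap.sub_apply, key]⟩
  have : t₁ - t₂ ∈ LinearMap.ker (A - LinearMap.id) ⊓ LinearMap.range (A - LinearMap.id) :=
    ⟨hker, hrange⟩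
  rw [hss] at this
  exact sub_eq_zero.mp (Submodule.mem_bot ℝ |>.mp this)

end AMS
end
end
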